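/- With respect to the encoding S₁′, for every m ≥ 1 the string 0^{p_m} has a unique minimal description, which uses the m-state transducer T_m; consequently 0^{p_m} ∈ L^{S₁′}_{=m}, and L^{S₁′}_{≤n−1} is strictly included in L^{S₁′}_{≤n} for every n ≥ 1. -/

import Mathlib

/-! ## Transducers

A deterministic sequential transducer over the binary alphabet `Bool`
(`false` = 0, `true` = 1), with state set `{0, …, n-1}` (representing the
states `1, …, n` of the paper) and start state `0` (the paper's state `1`). -/

structure Transducer where
  n : ℕ
  npos : 0 < n
  delta : Fin n → Bool → Fin n × List Bool

namespace Transducer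

/-- The start state. -/
def start (T : Transducer) : Fin T.n := ⟨0, T.npos⟩

/-- The (state) size of a transducer: its number of states. -/
def size (T : Transducer) : ℕ := T.n

/-- Running `T` from state `q` on an input string: resulting state and output. -/
def run (T : Transducer) (q : Fin T.n) : List Bool → Fin T.n × List Bool
  | [] => (q, [])
  | a :: x =>
    let s := T.delta q a
    let r := T.run s.1 x
    (r.1, s.2 ++ r.2)

/-- The function `{0,1}* → {0,1}*` computed by the transducer `T`. -/
def output (T : Transducer) (p : List Bool) : List Bool :=
  (T.run T.start p).2

end Transducer

/-- The one-state identity transducer. -/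
def idTransducer : Transducer :=
  ⟨1, Nat.one_pos, fun q b => (q, [b])⟩

/-! ## The standard encoding `S₀` -/

/-- `bin i`: the binary representation of `i ≥ 1`, most significant bit first. -/
def binRep (i : ℕ) : List Bool := (Nat.bits i).reverse

/-- `v† = v₁0v₂0⋯v_{m-1}0v_m1`. -/
def dagger : List Bool → List Bool
  | [] => []
  | [a] => [a, true]
  | a :: b :: v => a :: false :: dagger (b :: v)

/-- `v◇`: the bitwise complement of `(1v)†`. -/
def diamond (v : List Bool) : List Bool := (dagger (true :: v)).map (!·)

/-- The encoding `bin(i_t)‡ ⬝ v_t◇` of a single transition from state `j`,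
where `bin(i_t)‡ = ε` for a self-loop and `bin(i_t)† ` otherwise. -/
def encTransition {n : ℕ} (j : Fin n) (t : Fin n × List Bool) : List Bool :=
  (if t.1 = j then [] else dagger (binRep (t.1.val + 1))) ++ diamond t.2

/-- The standard encoding of a transducer: the concatenation, over the states
`j = 1, …, n` in order, of the encodings of the transitions on input `0` and
input `1` from `j`. -/
def stdEnc (T : Transducer) : List Bool :=
  (List.finRange T.n).flatMap fun j =>
    encTransition j (T.delta j false) ++ encTransition j (T.delta j true)

/-- `D_{S₀}`, the set of standard encodings of transducers. -/
def DS0 : Set (List Bool) := Set.range stdEnc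

/-- The set of sizes `|σ| + |p|` of descriptions `(T_σ, p)` of `x` with respect
to the standard encoding. -/
def stdSizes (x : List Bool) : Set ℕ :=
  {c | ∃ (T : Transducer) (p : List Bool),
    T.output p = x ∧ c = (stdEnc T).length + p.length}

/-- `C x`: the finite-state complexity of `x` w.r.t. the standard encoding. -/
noncomputable def Cstd (x : List Bool) : ℕ := sInf (stdSizes x)

/-- `L_{≤ m}` w.r.t. the standard encoding: strings having a minimal
description by a transducer with at most `m` states. -/
def stdLle (m : ℕ) : Set (List Bool) :=
  {x | ∃ (T : Transducer) (p : List Bool),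
    T.output p = x ∧ (stdEnc T).length + p.length = Cstd x ∧ T.size ≤ m}

/-! ## Computable encodings -/

/-- A computable encoding `S = (D_S, f_S)` of all transducers: a decidable
(computable) set `D_S ⊆ {0,1}*` together with a computable bijection
`f_S : D_S → 𝒯_DGSM`, presented via a decoding function
`decode : {0,1}* → Option Transducer` defined exactly on `D_S`; its
computability is expressed via the (injective) standard encoding `stdEnc`. -/
structure CompEncoding where
  D : Set (List Bool)
  dec : ComputablePred (· ∈ D)
  decode : List Bool → Option Transducer
  decode_dom : ∀ σ, (decode σ).isSome ↔ σ ∈ D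
  decode_inj : ∀ σ₁ ∈ D, ∀ σ₂ ∈ D, decode σ₁ = decode σ₂ → σ₁ = σ₂
  decode_surj : ∀ T : Transducer, ∃ σ, decode σ = some T
  decode_comp : Computable fun σ => (decode σ).map stdEnc

namespace CompEncoding

/-- The set of sizes `|σ| + |p|` of descriptions `(T^S_σ, p)` of `x`. -/
def sizes (S : CompEncoding) (x : List Bool) : Set ℕ :=
  {c | ∃ (σ : List Bool) (T : Transducer) (p : List Bool),
    S.decode σ = some T ∧ T.output p = x ∧ c = σ.length + p.length}

/-- `C_S x`: the finite-state complexity of `x` w.r.t. the encoding `S`. -/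
noncomputable def C (S : CompEncoding) (x : List Bool) : ℕ := sInf (S.sizes x)

/-- `L^S_{≤ m}`: strings having a minimal description by a transducer with at
most `m` states (this is empty for `m = 0` since every transducer has at
least one state). -/
def Lle (S : CompEncoding) (m : ℕ) : Set (List Bool) :=
  {x | ∃ (σ : List Bool) (T : Transducer) (p : List Bool),
    S.decode σ = some T ∧ T.output p = x ∧
    σ.length + p.length = S.C x ∧ T.size ≤ m}

/-- `L^S_{= m} = L^S_{≤ m} \ L^S_{≤ m-1}`. -/
def Leq (S : CompEncoding) (m : ℕ) : Set (List Bool) := S.Lle m \ S.Lle (m - 1)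

/-- `L^S_{∃min m}`: strings having a minimal description by a transducer with
exactly `m` states. -/
def LexistsMin (S : CompEncoding) (m : ℕ) : Set (List Bool) :=
  {x | ∃ (σ : List Bool) (T : Transducer) (p : List Bool),
    S.decode σ = some T ∧ T.output p = x ∧
    σ.length + p.length = S.C x ∧ T.size = m}

end CompEncoding

/-! ## The strings `u_i` and `x_n(m)` from the proof of Theorem 1 -/

/-- `u_i = 1 0^i 1^{2n+2-i}` (for `1 ≤ i ≤ 2n+1`, a string of length `2n+3`). -/
def u (n i : ℕ) : List Bool :=
  true :: (List.replicate i false ++ List.replicate (2 * n + 2 - i) true)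

/-- `x_n(m) = u_1^{m²} u_2^{m²} ⋯ u_{2n+1}^{m²}`. -/
def xnm (n m : ℕ) : List Bool :=
  (List.range (2 * n + 1)).flatMap fun i => (List.replicate (m ^ 2) (u n (i + 1))).flatten

/-! ## The transducer `T₁` and input `p₁` from the proof of Theorem 1 -/

/-- The `2n`-state transducer `T₁` with `Δ(j,0) = (j, u_j^m)` for `1 ≤ j ≤ 2n`,
`Δ(j,1) = (j+1, ε)` for `1 ≤ j ≤ 2n-1`, and `Δ(2n,1) = (2n, u_{2n+1}^m)`. -/
def T1 (n m : ℕ) (hn : 0 < n) : Transducer where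
  n := 2 * n
  npos := by omega
  delta := fun j b =>
    match b with
    | false => (j, (List.replicate m (u n (j.val + 1))).flatten)
    | true =>
      if h : j.val + 1 < 2 * n then (⟨j.val + 1, h⟩, [])
      else (j, (List.replicate m (u n (2 * n + 1))).flatten)

/-- `p₁ = (0^m 1)^{2n-1} 0^m 1^m`. -/
def p1 (n m : ℕ) : List Bool :=
  (List.replicate (2 * n - 1) (List.replicate m false ++ [true])).flatten
    ++ List.replicate m false ++ List.replicate m true

/-! ## The transducers `T_n` from Section 5 -/

/-- `p_i`: the `i`-th prime (`p₁ = 2`, `p₂ = 3`, …). -/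
noncomputable def nthPrime (i : ℕ) : ℕ := Nat.nth Nat.Prime (i - 1)

/-- The `n`-state transducer `T_n` with `Δ_n(1,0) = (1, 0^{p_n})`,
`Δ_n(i,0) = (i, ε)` for `2 ≤ i ≤ n`, `Δ_n(j,1) = (j+1, ε)` for
`1 ≤ j ≤ n-1`, and `Δ_n(n,1) = (n, ε)`. -/
noncomputable def Tsec5 (n : ℕ) (hn : 0 < n) : Transducer where
  n := n
  npos := hn
  delta := fun j b =>
    match b with
    | false =>
      if j.val = 0 then (j, List.replicate (nthPrime n) false) else (j, [])
    | true =>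
      if h : j.val + 1 < n then (⟨j.val + 1, h⟩, []) else (j, [])

/-- The defining properties of the encoding `S₁` of Theorem 4: each `T_n` is
encoded by `bin(n)`, and every transducer that is not one of the `T_n` is
encoded by `0` concatenated with its standard encoding. -/
def IsS1 (S : CompEncoding) : Prop :=
  (∀ (n : ℕ) (hn : 0 < n), S.decode (binRep n) = some (Tsec5 n hn)) ∧
  (∀ T : Transducer, (∀ (n : ℕ) (hn : 0 < n), T ≠ Tsec5 n hn) →
    S.decode (false :: stdEnc T) = some T)

/-- The defining properties of the encoding `S₁'` of Corollary 2: each `T_n` is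
encoded by `bin(n)† ⬝ 1^n`, and every transducer `T` that is not one of the
`T_n`, with standard encoding `σ`, is encoded by `0 ⬝ σ† ⬝ 1^{2^{|σ|}}`. -/
def IsS1' (S : CompEncoding) : Prop :=
  (∀ (n : ℕ) (hn : 0 < n),
    S.decode (dagger (binRep n) ++ List.replicate n true) = some (Tsec5 n hn)) ∧
  (∀ T : Transducer, (∀ (n : ℕ) (hn : 0 < n), T ≠ Tsec5 n hn) →
    S.decode (false :: (dagger (stdEnc T) ++
      List.replicate (2 ^ (stdEnc T).length) true)) = some T)


/-! ## Auxiliary lemmas for Statement 14 -/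

section Aux

open Finset in
lemma countPrime_le (t N : ℕ) :
    t * Nat.count Nat.Prime N ≤ t * 2 ^ t + 2 * N := by
  classical
  set F : Finset ℕ := {x ∈ range N | x.Prime} with hF
  have hcount : Nat.count Nat.Prime N = F.card := Nat.count_eq_card_filter_range _ N
  set G : Finset ℕ := {x ∈ F | 2 ^ t ≤ x} with hG
  have hsplit : F.card ≤ 2 ^ t + G.card := by
    have h1 : F \ G ⊆ range (2 ^ t) := by
      intro x hx
      simp only [hG, mem_sdiff, mem_filter] at hx
      have := hx.2
      simp only [mem_range]
      push_neg at this
      exact this hx.1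
    calc F.card ≤ (F \ G).card + G.card := by
          have hsub : G ⊆ F := filter_subset _ F
          rw [card_sdiff_add_card_eq_card hsub]
      _ ≤ 2 ^ t + G.card := by
          have := card_le_card h1
          simp only [card_range] at this; omega
  have hGprod : (2 ^ t) ^ G.card ≤ ∏ p ∈ G, p :=
    pow_card_le_prod G id _ (fun x hx => (mem_filter.mp hx).2)
  have hprodF : ∏ p ∈ G, p ≤ ∏ p ∈ F, p := by
    apply prod_le_prod_of_subset_of_one_le' (filter_subset _ F)
    intro i hi _
    exact (mem_filter.mp hi).2.one_lt.le
  have hprim : ∏ p ∈ F, p ≤ 4 ^ N := by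
    calc ∏ p ∈ F, p ≤ ∏ p ∈ {x ∈ range (N+1) | x.Prime}, p := by
          apply prod_le_prod_of_subset_of_one_le'
          · intro x hx
            simp only [hF, mem_filter, mem_range] at hx ⊢
            exact ⟨by omega, hx.2⟩
          · intro i hi _
            exact (mem_filter.mp hi).2.one_lt.le
      _ = primorial N := rfl
      _ ≤ 4 ^ N := primorial_le_4_pow N
  have hkey : 2 ^ (t * G.card) ≤ 2 ^ (2 * N) := by
    calc 2 ^ (t * G.card) = (2 ^ t) ^ G.card := by rw [pow_mul]
      _ ≤ 4 ^ N := le_trans hGprod (le_trans hprodF hprim)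
      _ = 2 ^ (2 * N) := by rw [pow_mul]; norm_num
  have htG : t * G.card ≤ 2 * N := (Nat.pow_le_pow_iff_right (le_refl 2)).mp hkey
  calc t * Nat.count Nat.Prime N = t * F.card := by rw [hcount]
    _ ≤ t * (2 ^ t + G.card) := Nat.mul_le_mul_left t hsplit
    _ = t * 2 ^ t + t * G.card := by ring
    _ ≤ t * 2 ^ t + 2 * N := by omega

lemma nthPrime_prime (m : ℕ) : (nthPrime m).Prime := Nat.prime_nth_prime (m-1)

lemma count_nthPrime (m : ℕ) (hm : 1 ≤ m) :
    Nat.count Nat.Prime (nthPrime m + 1) = m := by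
  have h := Nat.count_nth_succ_of_infinite Nat.infinite_setOf_prime (m - 1)
  unfold nthPrime
  rw [h]
  omega

lemma prime_key (t m : ℕ) (hm : 1 ≤ m) :
    t * m ≤ t * 2 ^ t + 2 * nthPrime m + 2 := by
  have h := countPrime_le t (nthPrime m + 1)
  rw [count_nthPrime m hm] at h
  omega

lemma nthPrime_inj {n m : ℕ} (hn : 1 ≤ n) (hm : 1 ≤ m) (h : nthPrime n = nthPrime m) :
    n = m := by
  have := Nat.nth_injective Nat.infinite_setOf_prime h
  omega

lemma sixteen_sq_le (c : ℕ) (hc : 1 ≤ c) : 16 * c ^ 2 ≤ 2 ^ (2 * c + 3) := by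
  induction c with
  | zero => omega
  | succ c ih =>
    rcases Nat.eq_or_lt_of_le hc with h | h
    · simp [← h]
    · have hc1 : 1 ≤ c := by omega
      have := ih hc1
      have h2 : 2 ^ (2 * (c+1) + 3) = 4 * 2 ^ (2 * c + 3) := by ring
      nlinarith [this, h2]

lemma sq_le_three_pow (b : ℕ) (hb : 1 ≤ b) : b ^ 2 ≤ 3 * 2 ^ (b - 1) := by
  induction b with
  | zero => omega
  | succ b ih =>
    rcases Nat.lt_or_ge b 4 with h | h
    · interval_cases b <;> norm_num
    · have hb1 : 1 ≤ b := by omega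
      have := ih hb1
      have h2 : 2 ^ (b + 1 - 1) = 2 * 2 ^ (b - 1) := by
        rw [Nat.succ_sub_one]
        conv_lhs => rw [show b = (b-1)+1 by omega]
        ring
      nlinarith [this, h2]

lemma blem (b : ℕ) : 4 * b ≤ 2 ^ (b - 1) + 124 := by
  rcases Nat.lt_or_ge b 32 with h | h
  · have : (0:ℕ) ≤ 2 ^ (b-1) := Nat.zero_le _
    interval_cases b <;> norm_num
  · have : b - 1 < 2 ^ (b - 1) := Nat.lt_two_pow_self (n := b - 1)
    have h8 : 8 * (b - 1) ≤ 2 ^ (b-1) := by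
      have hb6 : 6 ≤ b - 1 := by omega
      clear h this
      induction b with
      | zero => omega
      | succ b ih =>
        rcases Nat.lt_or_ge b 7 with h | h
        · interval_cases b <;> simp_all
        · have := ih (by omega)
          have h2 : 2 ^ (b + 1 - 1) = 2 * 2 ^ (b - 1) := by
            conv_lhs => rw [show b + 1 - 1 = (b-1)+1 by omega]
            ring
          omega
    omega

/-- The central arithmetic estimate for descriptions via the padded encoding. -/
lemma arith_main (m b c s P : ℕ) (hm : 1 ≤ m) (hb1 : 1 ≤ b)
    (hbm : 2 ^ (b - 1) ≤ m) (hc : 1 ≤ c) (hs : 2 * c + 4 ≤ s)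
    (hcP : nthPrime m ≤ c * P) (hP : 1 ≤ P) :
    2 * b + m + 2 ≤ 1 + 2 * s + 2 ^ s + P := by
  rcases Nat.lt_or_ge (2 ^ s) (m + 2 * b) with hcase | hcase
  · have hEs : (2:ℕ) ^ (2 * c + 4) ≤ 2 ^ s := Nat.pow_le_pow_right (by norm_num) hs
    set E : ℕ := 2 ^ (2 * c + 3) with hE
    have hE2 : (2:ℕ) ^ (2 * c + 4) = 2 * E := by
      rw [hE, show 2*c+4 = (2*c+3)+1 from rfl, pow_succ]; ring
    have key : 2 * c * (2 * b + m + 1) ≤ 2 * nthPrime m + 2 * c * (4 * c + 8) + 4 * c * E := by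
      rcases Nat.lt_or_ge c 2 with hc1 | hc2
      · have hc1' : c = 1 := by omega
        subst hc1'
        have h1 := prime_key 3 m hm
        norm_num at h1 ⊢
        have h2 := blem b
        have h3 : 4 * b ≤ m + 124 := le_trans h2 (by omega)
        omega
      · have h1 := prime_key (2 * c + 3) m hm
        rw [← hE] at h1
        have hA : 4 * b * c + 2 ≤ 3 * m + (2 * c - 3) * E + 8 * c ^ 2 + 14 * c := by
          have hEc : E ≤ (2 * c - 3) * E := Nat.le_mul_of_pos_left E (by omega)
          rcases Nat.lt_or_ge b (4 * c + 1) with hbc | hbc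
          · have h16 : 16 * c ^ 2 ≤ E := sixteen_sq_le c hc
            nlinarith
          · have hbb : 4 * b * c ≤ b ^ 2 := by nlinarith
            have h3 : b ^ 2 ≤ 3 * m := le_trans (sq_le_three_pow b hb1) (by omega)
            nlinarith
        have h2 : (2 * c + 3) * m ≤ (2 * c + 3) * E + 2 * nthPrime m + 2 := h1
        have hc3 : 3 ≤ 2 * c := by omega
        zify at h2 hA ⊢
        have hcast : ((2 * c - 3 : ℕ) : ℤ) = 2 * (c:ℤ) - 3 := by
          push_cast [Nat.cast_sub (by omega : 3 ≤ 2 * c)]; ring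
        rw [hcast] at hA
        nlinarith
    have key2 : 2 * c * (2 * b + m + 1) ≤ 2 * c * (P + (4 * c + 8) + 2 * E) := by
      calc 2 * c * (2 * b + m + 1) ≤ 2 * nthPrime m + 2 * c * (4 * c + 8) + 4 * c * E := key
        _ ≤ 2 * (c * P) + 2 * c * (4 * c + 8) + 4 * c * E := by omega
        _ = 2 * c * (P + (4 * c + 8) + 2 * E) := by ring
    have key3 : 2 * b + m + 1 ≤ P + (4 * c + 8) + 2 * E :=
      Nat.le_of_mul_le_mul_left key2 (by omega)
    have : 2 * E ≤ 2 ^ s := by rw [← hE2]; exact hEs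
    omega
  · have hs6 : 6 ≤ s := by omega
    omega

/-! ### Length lemmas for the encodings -/

lemma dagger_length (v : List Bool) (a : Bool) :
    (dagger (a :: v)).length = 2 * (v.length + 1) := by
  induction v generalizing a with
  | nil => simp [dagger]
  | cons b v ih => simp [dagger, ih b]; ring

lemma dagger_length' (v : List Bool) (hv : v ≠ []) :
    (dagger v).length = 2 * v.length := by
  cases v with
  | nil => exact absurd rfl hv
  | cons a v => rw [dagger_length]; simp

lemma diamond_length (v : List Bool) : (diamond v).length = 2 * v.length + 2 := by
  simp [diamond, dagger_length]; ring

lemma encTransition_length_ge {n : ℕ} (j : Fin n) (t : Fin n × List Bool) :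
    2 * t.2.length + 2 ≤ (encTransition j t).length := by
  simp [encTransition, diamond_length]

lemma flatMap_length_ge {α β : Type*} (l : List α) (f : α → List β) (a : α) (ha : a ∈ l) :
    (f a).length ≤ (l.flatMap f).length := by
  induction l with
  | nil => simp at ha
  | cons b l ih =>
    simp only [List.flatMap_cons, List.length_append]
    rcases List.mem_cons.mp ha with h | h
    · subst h; omega
    · have := ih h; omega

lemma stdEnc_length_ge (T : Transducer) (j : Fin T.n) (a : Bool) :
    2 * (T.delta j a).2.length + 4 ≤ (stdEnc T).length := by
  have hmem : j ∈ List.finRange T.n := List.mem_finRange j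
  have h := flatMap_length_ge (List.finRange T.n)
    (fun j => encTransition j (T.delta j false) ++ encTransition j (T.delta j true)) j hmem
  have h1 := encTransition_length_ge j (T.delta j false)
  have h2 := encTransition_length_ge j (T.delta j true)
  simp only [List.length_append] at h
  cases a
  · unfold stdEnc; omega
  · unfold stdEnc; omega

/-- the largest output chunk of a transducer -/
noncomputable def maxOut (T : Transducer) : ℕ :=
  Finset.sup Finset.univ (fun qa : Fin T.n × Bool => ((T.delta qa.1 qa.2).2).length)

lemma chunk_le_maxOut (T : Transducer) (q : Fin T.n) (a : Bool) :
    ((T.delta q a).2).length ≤ maxOut T :=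
  Finset.le_sup (f := fun qa : Fin T.n × Bool => ((T.delta qa.1 qa.2).2).length)
    (Finset.mem_univ (q, a))

lemma maxOut_exists (T : Transducer) : ∃ (q : Fin T.n) (a : Bool),
    ((T.delta q a).2).length = maxOut T := by
  have hne : (Finset.univ : Finset (Fin T.n × Bool)).Nonempty := by
    have : 0 < T.n := T.npos
    exact ⟨(⟨0, this⟩, false), Finset.mem_univ _⟩
  obtain ⟨b, _, hb⟩ := Finset.exists_mem_eq_sup Finset.univ hne
    (fun qa : Fin T.n × Bool => ((T.delta qa.1 qa.2).2).length)
  exact ⟨b.1, b.2, hb.symm⟩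

lemma stdEnc_length_ge' (T : Transducer) : 2 * maxOut T + 4 ≤ (stdEnc T).length := by
  obtain ⟨q, a, h⟩ := maxOut_exists T
  have := stdEnc_length_ge T q a
  omega

lemma run_length_le (T : Transducer) (p : List Bool) (q : Fin T.n) :
    ((T.run q p).2).length ≤ p.length * maxOut T := by
  induction p generalizing q with
  | nil => simp [Transducer.run]
  | cons a p ih =>
    simp only [Transducer.run, List.length_append, List.length_cons]
    have h1 := chunk_le_maxOut T q a
    have h2 := ih (T.delta q a).1
    calc ((T.delta q a).2).length + ((T.run (T.delta q a).1 p).2).length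
        ≤ maxOut T + p.length * maxOut T := by omega
      _ = (p.length + 1) * maxOut T := by ring

lemma output_length_le (T : Transducer) (p : List Bool) :
    (T.output p).length ≤ p.length * maxOut T := run_length_le T p T.start

lemma binRep_length (i : ℕ) : (binRep i).length = Nat.size i := by
  simp [binRep, Nat.size_eq_bits_len]

lemma binRep_ne_nil (i : ℕ) (hi : 1 ≤ i) : binRep i ≠ [] := by
  intro h
  have := binRep_length i
  rw [h] at this
  simp at this
  have : 0 < Nat.size i := Nat.size_pos.mpr hi
  omega

lemma sigma_star_length (m : ℕ) (hm : 1 ≤ m) :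
    (dagger (binRep m) ++ List.replicate m true).length = 2 * Nat.size m + m := by
  rw [List.length_append, List.length_replicate,
    dagger_length' _ (binRep_ne_nil m hm), binRep_length]

/-! ### Behaviour of the transducers `T_n` -/

/-- count of the 0s in `p` that are consumed in the initial state of `T_n` -/
def countZ (n : ℕ) : List Bool → ℕ
  | [] => 0
  | false :: p => countZ n p + 1
  | true :: p => if n = 1 then countZ n p else 0

lemma tsec5_run_ne0 (n : ℕ) (hn : 0 < n) (p : List Bool) (q : Fin (Tsec5 n hn).n)
    (hq : q.val ≠ 0) : ((Tsec5 n hn).run q p).2 = [] := by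
  induction p generalizing q with
  | nil => rfl
  | cons a p ih =>
    cases a
    · show ((Tsec5 n hn).delta q false).2 ++ ((Tsec5 n hn).run ((Tsec5 n hn).delta q false).1 p).2 = []
      have hd : (Tsec5 n hn).delta q false = (q, []) := by
        show (if q.val = 0 then (q, List.replicate (nthPrime n) false) else (q, [])) = (q, [])
        rw [if_neg hq]
      rw [hd]
      simpa using ih q hq
    · show ((Tsec5 n hn).delta q true).2 ++ ((Tsec5 n hn).run ((Tsec5 n hn).delta q true).1 p).2 = []
      by_cases h : q.val + 1 < n
      · have hnn : (Tsec5 n hn).n = n := rfl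
        have h' : q.val + 1 < (Tsec5 n hn).n := by omega
        have hd : (Tsec5 n hn).delta q true = (⟨q.val + 1, h'⟩, []) := by
          show (if h : q.val + 1 < n then ((⟨q.val + 1, h⟩ : Fin n), ([] : List Bool)) else (q, [])) = _
          rw [dif_pos h]; rfl
        rw [hd]
        simpa using ih ⟨q.val + 1, h'⟩ (Nat.succ_ne_zero _)
      · have hd : (Tsec5 n hn).delta q true = (q, []) := by
          show (if h : q.val + 1 < n then ((⟨q.val + 1, h⟩ : Fin n), ([] : List Bool)) else (q, [])) = _
          rw [dif_neg h]; rfl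
        rw [hd]
        simpa using ih q hq

lemma tsec5_run_zero (n : ℕ) (hn : 0 < n) (p : List Bool) :
    ((Tsec5 n hn).run (⟨0, hn⟩ : Fin (Tsec5 n hn).n) p).2
      = List.replicate (countZ n p * nthPrime n) false := by
  induction p with
  | nil => simp [Transducer.run, countZ]
  | cons a p ih =>
    cases a
    · show ((Tsec5 n hn).delta ⟨0, hn⟩ false).2
          ++ ((Tsec5 n hn).run ((Tsec5 n hn).delta ⟨0, hn⟩ false).1 p).2 = _
      have hd : (Tsec5 n hn).delta ⟨0, hn⟩ false
          = ((⟨0, hn⟩ : Fin (Tsec5 n hn).n), List.replicate (nthPrime n) false) := rfl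
      rw [hd, ih]
      show List.replicate (nthPrime n) false ++ List.replicate (countZ n p * nthPrime n) false = _
      rw [← List.replicate_add]
      congr 1
      show nthPrime n + countZ n p * nthPrime n = countZ n (false :: p) * nthPrime n
      show nthPrime n + countZ n p * nthPrime n = (countZ n p + 1) * nthPrime n
      ring
    · show ((Tsec5 n hn).delta ⟨0, hn⟩ true).2
          ++ ((Tsec5 n hn).run ((Tsec5 n hn).delta ⟨0, hn⟩ true).1 p).2 = _
      by_cases h : (0:ℕ) + 1 < n
      · have hnn : (Tsec5 n hn).n = n := rfl
        have h' : (1:ℕ) < (Tsec5 n hn).n := by omega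
        have hd : (Tsec5 n hn).delta ⟨0, hn⟩ true = (⟨1, h'⟩, []) := by
          show (if h : (0:ℕ) + 1 < n then ((⟨0 + 1, h⟩ : Fin n), ([] : List Bool)) else _) = _
          rw [dif_pos h]; rfl
        rw [hd]
        have := tsec5_run_ne0 n hn p ⟨1, h'⟩ Nat.one_ne_zero
        rw [this]
        show ([] : List Bool) = List.replicate (countZ n (true :: p) * nthPrime n) false
        have hz : countZ n (true :: p) = 0 := by
          show (if n = 1 then countZ n p else 0) = 0
          rw [if_neg (by omega)]
        rw [hz]; simp
      · have hn1 : n = 1 := by omega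
        have hd : (Tsec5 n hn).delta ⟨0, hn⟩ true = ((⟨0, hn⟩ : Fin (Tsec5 n hn).n), ([] : List Bool)) := by
          show (if h : (0:ℕ) + 1 < n then ((⟨0 + 1, h⟩ : Fin n), ([] : List Bool)) else _) = _
          rw [dif_neg h]; rfl
        rw [hd, ih]
        have hz : countZ n (true :: p) = countZ n p := by
          show (if n = 1 then countZ n p else 0) = _
          rw [if_pos hn1]
        rw [hz]; simp

lemma tsec5_output (n : ℕ) (hn : 0 < n) (p : List Bool) :
    (Tsec5 n hn).output p = List.replicate (countZ n p * nthPrime n) false :=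
  tsec5_run_zero n hn p

lemma countZ_len_one (n : ℕ) (p : List Bool) (h : p.length = 1) (hz : countZ n p = 1) :
    p = [false] := by
  match p, h with
  | [a], _ =>
    cases a
    · rfl
    · exfalso
      have : countZ n [true] = if n = 1 then 0 else 0 := by
        show (if n = 1 then countZ n [] else 0) = _
        split <;> rfl
      simp at this
      omega

lemma countZ_pos_len (n : ℕ) (p : List Bool) (hz : 1 ≤ countZ n p) : 1 ≤ p.length := by
  cases p with
  | nil => simp [countZ] at hz
  | cons a p => simp

lemma tsec5_output_false (m : ℕ) (hm : 0 < m) :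
    (Tsec5 m hm).output [false] = List.replicate (nthPrime m) false := by
  rw [tsec5_output]
  have : countZ m [false] = 1 := rfl
  rw [this, one_mul]

/-! ### Classification of descriptions under `S₁'` -/

lemma S1'_classify (S : CompEncoding) (hS : IsS1' S) {σ : List Bool} {T : Transducer}
    (h : S.decode σ = some T) :
    (∃ (n : ℕ) (hn : 0 < n), T = Tsec5 n hn ∧
        σ = dagger (binRep n) ++ List.replicate n true) ∨
    σ = false :: (dagger (stdEnc T) ++ List.replicate (2 ^ (stdEnc T).length) true) := by
  have hσD : σ ∈ S.D := (S.decode_dom σ).mp (by rw [h]; rfl)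
  by_cases hex : ∃ (n : ℕ) (hn : 0 < n), T = Tsec5 n hn
  · obtain ⟨n, hn, hT⟩ := hex
    left
    refine ⟨n, hn, hT, ?_⟩
    have h2 := hS.1 n hn
    have hσ'D : (dagger (binRep n) ++ List.replicate n true) ∈ S.D :=
      (S.decode_dom _).mp (by rw [h2]; rfl)
    exact S.decode_inj σ hσD _ hσ'D (by rw [h, h2, hT])
  · right
    push_neg at hex
    have h2 := hS.2 T hex
    have hσ'D : (false :: (dagger (stdEnc T) ++
        List.replicate (2 ^ (stdEnc T).length) true)) ∈ S.D :=
      (S.decode_dom _).mp (by rw [h2]; rfl)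
    exact S.decode_inj σ hσD _ hσ'D (by rw [h, h2])

/-- every description of `0^{p_m}` has length at least `2·|bin m| + m + 1`, with
equality only for the canonical one. -/
lemma desc_lower (S : CompEncoding) (hS : IsS1' S) (m : ℕ) (hm : 0 < m)
    {σ : List Bool} {T : Transducer} {p : List Bool}
    (hdec : S.decode σ = some T)
    (hout : T.output p = List.replicate (nthPrime m) false) :
    2 * Nat.size m + m + 1 ≤ σ.length + p.length ∧
    (σ.length + p.length = 2 * Nat.size m + m + 1 →
      T = Tsec5 m hm ∧ σ = dagger (binRep m) ++ List.replicate m true ∧ p = [false]) := by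
  have hpm2 : 2 ≤ nthPrime m := (nthPrime_prime m).two_le
  rcases S1'_classify S hS hdec with ⟨n, hn, hT, hσ⟩ | hσ
  · -- canonical case
    rw [hT, tsec5_output n hn] at hout
    have hlen := congrArg List.length hout
    simp only [List.length_replicate] at hlen
    have hdvd : nthPrime n ∣ nthPrime m := ⟨countZ n p, by rw [← hlen]; ring⟩
    have heq : nthPrime n = nthPrime m :=
      (Nat.prime_dvd_prime_iff_eq (nthPrime_prime n) (nthPrime_prime m)).mp hdvd
    have hnm : n = m := nthPrime_inj hn hm heq
    subst hnm
    have hZ : countZ n p = 1 := by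
      have hpos : 0 < nthPrime n := by omega
      have : countZ n p * nthPrime n = 1 * nthPrime n := by rw [one_mul, hlen]
      exact Nat.eq_of_mul_eq_mul_right hpos this
    have hplen : 1 ≤ p.length := countZ_pos_len n p (by omega)
    have hσlen : σ.length = 2 * Nat.size n + n := by
      rw [hσ, sigma_star_length n hn]
    constructor
    · omega
    · intro hEq
      have hp1 : p.length = 1 := by omega
      exact ⟨hT, hσ, countZ_len_one n p hp1 hZ⟩
  · -- padded case: length is strictly bigger
    set s : ℕ := (stdEnc T).length with hs
    have hs4 : 2 * maxOut T + 4 ≤ s := stdEnc_length_ge' T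
    have hsne : stdEnc T ≠ [] := by
      intro hnil
      rw [hnil] at hs
      simp at hs
      omega
    have hσlen : σ.length = 1 + 2 * s + 2 ^ s := by
      rw [hσ]
      simp only [List.length_cons, List.length_append, List.length_replicate,
        dagger_length' _ hsne]
      omega
    have houtlen : nthPrime m ≤ p.length * maxOut T := by
      have := output_length_le T p
      rw [hout] at this
      simpa using this
    have hc1 : 1 ≤ maxOut T := by
      rcases Nat.eq_zero_or_pos (maxOut T) with h0 | h0
      · rw [h0] at houtlen; omega
      · exact h0
    have hP1 : 1 ≤ p.length := by
      rcases Nat.eq_zero_or_pos p.length with h0 | h0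
      · rw [h0] at houtlen; omega
      · exact h0
    have hb1 : 1 ≤ Nat.size m := Nat.size_pos.mpr hm
    have hbm : 2 ^ (Nat.size m - 1) ≤ m := Nat.lt_size.mp (by omega)
    have harith := arith_main m (Nat.size m) (maxOut T) s p.length hm hb1 hbm hc1
      hs4 (by rw [mul_comm]; exact houtlen) hP1
    constructor
    · omega
    · intro hEq
      omega

/-- the finite-state complexity of `0^{p_m}` with respect to `S₁'`. -/
lemma C_val (S : CompEncoding) (hS : IsS1' S) (m : ℕ) (hm : 0 < m) :
    S.C (List.replicate (nthPrime m) false) = 2 * Nat.size m + m + 1 := by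
  have hmem : 2 * Nat.size m + m + 1 ∈ S.sizes (List.replicate (nthPrime m) false) := by
    refine ⟨dagger (binRep m) ++ List.replicate m true, Tsec5 m hm, [false],
      hS.1 m hm, tsec5_output_false m hm, ?_⟩
    rw [sigma_star_length m hm]
    simp
  apply le_antisymm (Nat.sInf_le hmem)
  apply le_csInf ⟨_, hmem⟩
  rintro y ⟨σ, T, p, h1, h2, h3⟩
  rw [h3]
  exact (desc_lower S hS m hm h1 h2).1

end Aux

theorem stmt14 (S : CompEncoding) (hS : IsS1' S) :
    (∀ (m : ℕ) (hm : 0 < m),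
      (∃ (σ p : List Bool), S.decode σ = some (Tsec5 m hm) ∧
        (Tsec5 m hm).output p = List.replicate (nthPrime m) false ∧
        σ.length + p.length = S.C (List.replicate (nthPrime m) false)) ∧
      (∀ (σ : List Bool) (T : Transducer) (p : List Bool),
        S.decode σ = some T → T.output p = List.replicate (nthPrime m) false →
        σ.length + p.length = S.C (List.replicate (nthPrime m) false) →
        T = Tsec5 m hm ∧ σ = dagger (binRep m) ++ List.replicate m true ∧ p = [false]) ∧
      List.replicate (nthPrime m) false ∈ S.Leq m) ∧
    (∀ n : ℕ, 1 ≤ n → S.Lle (n - 1) ⊂ S.Lle n) := by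
  have key : ∀ (m : ℕ) (hm : 0 < m),
      List.replicate (nthPrime m) false ∈ S.Lle m ∧
      List.replicate (nthPrime m) false ∉ S.Lle (m - 1) := by
    intro m hm
    have hC := C_val S hS m hm
    constructor
    · refine ⟨dagger (binRep m) ++ List.replicate m true, Tsec5 m hm, [false],
        hS.1 m hm, tsec5_output_false m hm, ?_, le_of_eq (rfl : (Tsec5 m hm).size = m)⟩
      rw [hC, sigma_star_length m hm]
      simp
    · rintro ⟨σ, T, p, h1, h2, h3, h4⟩
      rw [hC] at h3
      obtain ⟨hT, -, -⟩ := (desc_lower S hS m hm h1 h2).2 h3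
      rw [hT] at h4
      have hsz : (Tsec5 m hm).size = m := rfl
      omega
  constructor
  · intro m hm
    have hC := C_val S hS m hm
    refine ⟨?_, ?_, ?_⟩
    · refine ⟨dagger (binRep m) ++ List.replicate m true, [false],
        hS.1 m hm, tsec5_output_false m hm, ?_⟩
      rw [hC, sigma_star_length m hm]
      simp
    · intro σ T p h1 h2 h3
      rw [hC] at h3
      exact (desc_lower S hS m hm h1 h2).2 h3
    · exact ⟨(key m hm).1, (key m hm).2⟩
  · intro n hn
    have hsub : S.Lle (n - 1) ⊆ S.Lle n := by
      rintro x ⟨σ, T, p, h1, h2, h3, h4⟩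
      exact ⟨σ, T, p, h1, h2, h3, le_trans h4 (by omega)⟩
    rw [Set.ssubset_iff_of_subset hsub]
    exact ⟨List.replicate (nthPrime n) false, (key n hn).1, (key n hn).2⟩
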